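/- Let K be the algebraic closure of F_q and F = K(x) the rational function field. Let u(x), v(x) ∈ F_{q^n}[x] with deg u ≡ 1 mod p and deg v < deg u. Suppose w = −T_δ(α^{q^{n−δ+1}}) u(x) − α^{q^{n−δ}} v(x) with T_n(α) = 0 and gcd(δ, n) = 1, and suppose the polynomial X^p − X − w has a root in K(x). Then α = 0 and w = 0. -/

import Mathlib

open Polynomial

private lemma aux_pow_sum {p : ℕ} [Fact p.Prime] {K : Type*} [Field K] [CharP K p]
    (e : ℕ) {ι : Type*} (s : Finset ι) (f : ι → K) (m : ℕ) :
    (∑ i ∈ s, f i) ^ (p ^ e) ^ m = ∑ i ∈ s, f i ^ (p ^ e) ^ m := by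
  have := map_sum (iterateFrobenius K p (e * m)) f s
  simpa only [iterateFrobenius_def, pow_mul] using this

private lemma aux_T_add {p : ℕ} [Fact p.Prime] {K : Type*} [Field K] [CharP K p]
    (e : ℕ) (α : K) (a b : ℕ) :
    (∑ i ∈ Finset.range (a + b), α ^ (p ^ e) ^ i)
      = (∑ i ∈ Finset.range a, α ^ (p ^ e) ^ i)
        + (∑ i ∈ Finset.range b, α ^ (p ^ e) ^ i) ^ (p ^ e) ^ a := by
  rw [aux_pow_sum, Finset.sum_range_add]
  congr 1
  apply Finset.sum_congr rfl
  intro i _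
  rw [add_comm a i, pow_add, pow_mul]

private lemma aux_T_mul {p : ℕ} [Fact p.Prime] {K : Type*} [Field K] [CharP K p]
    (e : ℕ) (α : K) {a : ℕ} (hT : (∑ i ∈ Finset.range a, α ^ (p ^ e) ^ i) = 0) (k : ℕ) :
    (∑ i ∈ Finset.range (a * k), α ^ (p ^ e) ^ i) = 0 := by
  induction k with
  | zero => simp
  | succ k ih =>
      rw [Nat.mul_succ, aux_T_add, ih, hT, zero_add, zero_pow]
      exact pow_ne_zero _ (pow_ne_zero _ (Fact.out : p.Prime).ne_zero)

private lemma aux_gcd {p : ℕ} [Fact p.Prime] {K : Type*} [Field K] [CharP K p]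
    (e : ℕ) (α : K) :
    ∀ a b : ℕ, (∑ i ∈ Finset.range a, α ^ (p ^ e) ^ i) = 0 →
      (∑ i ∈ Finset.range b, α ^ (p ^ e) ^ i) = 0 →
      (∑ i ∈ Finset.range (Nat.gcd a b), α ^ (p ^ e) ^ i) = 0 := by
  intro a b
  induction a, b using Nat.gcd.induction with
  | H0 b => intro _ h; simpa using h
  | H1 a b ha ih =>
      intro hTa hTb
      rw [Nat.gcd_rec]
      refine ih ?_ hTa
      have h1 : (∑ i ∈ Finset.range (a * (b / a)), α ^ (p ^ e) ^ i) = 0 :=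
        aux_T_mul (p := p) e α hTa _
      have h2 := aux_T_add (p := p) e α (a * (b / a)) (b % a)
      rw [Nat.div_add_mod b a, hTb, h1, zero_add] at h2
      exact (pow_eq_zero_iff
        (pow_ne_zero _ (pow_ne_zero _ (Fact.out : p.Prime).ne_zero))).mp h2.symm

theorem stmt_3 (p e : ℕ) [Fact p.Prime] (he : 0 < e) (q : ℕ) (hq : q = p ^ e)
    (n δ : ℕ) (hn : 2 ≤ n) (hδ1 : 1 ≤ δ) (hδn : δ < n) (hcop : Nat.gcd δ n = 1)
    (K : Type*) [Field K] [IsAlgClosed K] [CharP K p]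
    (u v : Polynomial K)
    (hu : ∀ i, (u.coeff i) ^ q ^ n = u.coeff i)  -- u has coefficients in 𝔽_{q^n}
    (hv : ∀ i, (v.coeff i) ^ q ^ n = v.coeff i)  -- v has coefficients in 𝔽_{q^n}
    (hdegu : u.natDegree % p = 1) (hdegv : v.natDegree < u.natDegree)
    (α : K) (hα : ∑ i ∈ Finset.range n, α ^ q ^ i = 0)
    (w : Polynomial K)
    (hw : w = - Polynomial.C (∑ i ∈ Finset.range δ, (α ^ q ^ (n - δ + 1)) ^ q ^ i) * u
        - Polynomial.C (α ^ q ^ (n - δ)) * v)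
    (hroot : ∃ g : RatFunc K, g ^ p - g = algebraMap (Polynomial K) (RatFunc K) w) :
    α = 0 ∧ w = 0 := by
  subst hq
  have hp := (Fact.out : p.Prime)
  have hp2 : 2 ≤ p := hp.two_le
  have hqne : (p ^ e : ℕ) ≠ 0 := pow_ne_zero _ hp.ne_zero
  set c := ∑ i ∈ Finset.range δ, (α ^ (p ^ e) ^ (n - δ + 1)) ^ (p ^ e) ^ i with hcdef
  have hc : c = (∑ i ∈ Finset.range δ, α ^ (p ^ e) ^ i) ^ (p ^ e) ^ (n - δ + 1) := by
    rw [hcdef, aux_pow_sum]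
    exact Finset.sum_congr rfl fun i _ => pow_right_comm α _ _
  -- degree facts about u
  have hune : u ≠ 0 := by
    intro h
    rw [h, natDegree_zero, Nat.zero_mod] at hdegu
    omega
  have huc : u.coeff u.natDegree ≠ 0 := by
    rw [← Polynomial.leadingCoeff]
    exact leadingCoeff_ne_zero.mpr hune
  set N := u.natDegree with hNdef
  have hN1 : 1 ≤ N := by
    rcases Nat.eq_zero_or_pos N with h | h
    · rw [h, Nat.zero_mod] at hdegu; omega
    · exact h
  have hc0 : c = 0 := by
    by_contra hcne
    obtain ⟨g, hg⟩ := hroot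
    -- w has natDegree N
    have hvN : v.coeff N = 0 := coeff_eq_zero_of_natDegree_lt hdegv
    have hwN : w.coeff N = -(c * u.coeff N) := by
      rw [hw, neg_mul, coeff_sub, coeff_neg, coeff_C_mul, coeff_C_mul, hvN, mul_zero,
        sub_zero]
    have hwNne : w.coeff N ≠ 0 := by
      rw [hwN]
      exact neg_ne_zero.mpr (mul_ne_zero hcne huc)
    have hwle : w.natDegree ≤ N := by
      rw [hw]
      refine le_trans (natDegree_sub_le _ _) (max_le ?_ ?_)
      · rw [neg_mul, natDegree_neg]
        exact natDegree_C_mul_le _ _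
      · exact le_trans (natDegree_C_mul_le _ _) (le_of_lt hdegv)
    have hwdeg : w.natDegree = N :=
      le_antisymm hwle (le_natDegree_of_ne_zero hwNne)
    -- g is integral over K[x]
    have hint : IsIntegral (Polynomial K) g := by
      refine ⟨X ^ p - (X + C w), ?_, ?_⟩
      · apply monic_X_pow_sub
        refine lt_of_le_of_lt (degree_add_le _ _) ?_
        rw [degree_X]
        refine max_lt ?_ (lt_of_le_of_lt (degree_C_le) ?_)
        · exact_mod_cast (by omega : (1 : ℕ) < p)
        · exact lt_of_lt_of_le zero_lt_one
            (by exact_mod_cast (by omega : (1 : ℕ) ≤ p))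
      · rw [eval₂_sub, eval₂_add, eval₂_X_pow, eval₂_X, eval₂_C, sub_eq_zero]
        rw [sub_eq_iff_eq_add] at hg
        rw [hg]; ring
    obtain ⟨h, hh⟩ := IsIntegrallyClosed.isIntegral_iff.mp hint
    have hpw : h ^ p - h = w := by
      apply IsFractionRing.injective (Polynomial K) (RatFunc K)
      rw [map_sub, map_pow, hh, hg]
    rcases Nat.eq_zero_or_pos h.natDegree with h0 | hpos
    · have hle : (h ^ p - h).natDegree = 0 := by
        refine Nat.le_zero.mp (le_trans (natDegree_sub_le _ _) ?_)
        rw [natDegree_pow, h0]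
        simp
      rw [hpw, hwdeg] at hle
      omega
    · have hlt : h.natDegree < (h ^ p).natDegree := by
        rw [natDegree_pow]
        nlinarith
      have hde : (h ^ p - h).natDegree = p * h.natDegree := by
        rw [natDegree_sub_eq_left_of_natDegree_lt hlt, natDegree_pow]
      rw [hpw, hwdeg] at hde
      have := Nat.mul_mod_right p h.natDegree
      rw [← hde] at this
      omega
  -- from c = 0 deduce T_δ α = 0, then α = 0
  have hTδ : (∑ i ∈ Finset.range δ, α ^ (p ^ e) ^ i) = 0 := by
    rw [hc] at hc0
    exact (pow_eq_zero_iff (pow_ne_zero _ hqne)).mp hc0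
  have hα0 : α = 0 := by
    have h := aux_gcd e α δ n hTδ hα
    rw [hcop] at h
    simpa using h
  refine ⟨hα0, ?_⟩
  rw [hw, hc0, hα0, zero_pow (pow_ne_zero _ hqne)]
  simp
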